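/- Let X be a real random variable, let (τ_k)_{k≥1} be i.i.d. nonnegative random variables with 0 < E[τ₁] < ∞ which are independent of X, set S₀ := 0 and S_n := τ₁ + ⋯ + τ_n, and let c > 0. Then for every x ∈ ℝ one has the non-asymptotic bound ∫_x^∞ P(X > u) du ≤ c·E[τ₁]·Σ_{n=0}^∞ P(X > x + c·S_n). -/

import Mathlib

open MeasureTheory ProbabilityTheory Filter
open scoped ENNReal

/-- **Upper-bound half of Lemma 4.2.** For any real random variable `X`,
i.i.d. nonnegative `(τ k)` with positive finite mean, independent of `X`,
partial sums `S n = τ 0 + ⋯ + τ (n-1)` and `c > 0`, for every `x`: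
`∫_x^∞ P(X > u) du ≤ c · E[τ 0] · ∑_{n≥0} P(X > x + c S_n)`. -/
theorem integrated_tail_le_series
    {Ω : Type*} [MeasurableSpace Ω] (μ : Measure Ω) [IsProbabilityMeasure μ]
    (X : Ω → ℝ) (τ : ℕ → Ω → ℝ) (c : ℝ) (hc : 0 < c)
    (hX : Measurable X) (hτ : ∀ k, Measurable (τ k))
    (hτnonneg : ∀ k ω, 0 ≤ τ k ω)
    (hint : Integrable (τ 0) μ) (hmean : 0 < ∫ ω, τ 0 ω ∂μ)
    (hident : ∀ k, IdentDistrib (τ k) (τ 0) μ μ)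
    (hindep : iIndepFun
      (fun i => Option.elim i X τ) μ) :
    ∀ x : ℝ,
      (∫⁻ u in Set.Ioi x, μ {ω | X ω > u}) ≤
        ENNReal.ofReal (c * ∫ ω, τ 0 ω ∂μ) *
          ∑' n : ℕ, μ {ω | X ω > x + c * ∑ k ∈ Finset.range n, τ k ω} := by
  classical
  intro x
  set m : ℝ := ∫ ω, τ 0 ω ∂μ with hm
  set S : ℕ → Ω → ℝ := fun n ω => ∑ k ∈ Finset.range n, τ k ω with hSdef
  have hSmeas : ∀ n, Measurable (S n) := fun n => Finset.measurable_sum _ fun k _ => hτ k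
  set A : ℕ → Set Ω := fun n => {ω | X ω > x + c * S n ω} with hAdef
  have hAmeas : ∀ n, MeasurableSet (A n) :=
    fun n => measurableSet_lt (measurable_const.add ((hSmeas n).const_mul c)) hX
  have hOptMeas : ∀ i : Option ℕ, Measurable (Option.elim i X τ) := by
    intro i; cases i with
    | none => exact hX
    | some k => exact hτ k
  -- SLLN gives a.e. divergence of the partial sums
  have hpair : Pairwise (Function.onFun (IndepFun · · μ) τ) := by
    intro i j hij
    exact hindep.indepFun (i := some i) (j := some j) (by simpa using hij)
  have hslln := strong_law_ae τ hint hpair hident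
  have hdiv : ∀ᵐ ω ∂μ, Tendsto (fun n => S n ω) atTop atTop := by
    filter_upwards [hslln] with ω hω
    have h1 : Tendsto (fun n : ℕ => ((n : ℝ)⁻¹ * S n ω) * n) atTop atTop :=
      Tendsto.pos_mul_atTop hmean (by simpa [smul_eq_mul] using hω) tendsto_natCast_atTop_atTop
    refine Tendsto.congr' ?_ h1
    filter_upwards [eventually_ge_atTop 1] with n hn
    have hn0 : (n : ℝ) ≠ 0 := by positivity
    field_simp
  -- layer cake
  have hanti : Antitone fun u : ℝ => μ {ω | X ω > u} := fun u v huv =>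
    measure_mono fun ω (h : X ω > v) => lt_of_le_of_lt huv h
  have hgmeas : Measurable fun u : ℝ => μ {ω | X ω > u} := hanti.measurable
  have hmp : MeasurePreserving (fun t : ℝ => t + x) volume volume :=
    measurePreserving_add_right volume x
  have hpre : (fun t : ℝ => t + x) ⁻¹' Set.Ioi x = Set.Ioi 0 := by
    ext t; simp
  have htrans : (∫⁻ u in Set.Ioi x, μ {ω | X ω > u}) =
      ∫⁻ t in Set.Ioi 0, μ {ω | X ω > x + t} := by
    rw [show (volume : Measure ℝ).restrict (Set.Ioi x) =
        Measure.map (fun t : ℝ => t + x) (volume.restrict (Set.Ioi 0)) from by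
      rw [← hpre, ← Measure.restrict_map hmp.measurable measurableSet_Ioi, hmp.map_eq],
      lintegral_map hgmeas hmp.measurable]
    exact lintegral_congr fun t => by rw [add_comm]
  have hlayer : (∫⁻ u in Set.Ioi x, μ {ω | X ω > u}) =
      ∫⁻ ω, ENNReal.ofReal (max (X ω - x) 0) ∂μ := by
    rw [htrans, lintegral_eq_lintegral_meas_lt μ (f := fun ω => max (X ω - x) 0)
      (ae_of_all _ fun ω => le_max_right _ _)
      ((hX.sub measurable_const).max measurable_const).aemeasurable]
    refine setLIntegral_congr_fun measurableSet_Ioi (fun t ht => ?_)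
    have ht0 : 0 < t := ht
    congr 1
    ext ω
    simp only [Set.mem_setOf_eq, lt_max_iff]
    constructor
    · intro h; exact Or.inl (by linarith)
    · rintro (h | h) <;> linarith
  -- pointwise bound
  have hbound : ∀ᵐ ω ∂μ, ENNReal.ofReal (max (X ω - x) 0) ≤
      ∑' n, ENNReal.ofReal (c * τ n ω) * (A n).indicator 1 ω := by
    filter_upwards [hdiv] with ω hω
    rcases le_or_gt (X ω) x with hxle | hxlt
    · simp [max_eq_right (by linarith : X ω - x ≤ 0)]
    · have hex : ∃ n, X ω ≤ x + c * S n ω := by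
        have h2 := (hω.const_mul_atTop hc).eventually_ge_atTop (X ω - x)
        rcases h2.exists with ⟨n, hn⟩
        exact ⟨n, by linarith⟩
      have hNspec : X ω ≤ x + c * S (Nat.find hex) ω := Nat.find_spec hex
      have hlt : ∀ k < Nat.find hex, ω ∈ A k := fun k hk =>
        (show X ω > x + c * S k ω from not_le.mp (Nat.find_min hex hk))
      calc ENNReal.ofReal (max (X ω - x) 0) = ENNReal.ofReal (X ω - x) := by
            rw [max_eq_left (by linarith)]
        _ ≤ ENNReal.ofReal (c * S (Nat.find hex) ω) :=
            ENNReal.ofReal_le_ofReal (by linarith)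
        _ = ∑ k ∈ Finset.range (Nat.find hex), ENNReal.ofReal (c * τ k ω) := by
            show ENNReal.ofReal (c * ∑ k ∈ Finset.range (Nat.find hex), τ k ω) = _
            rw [Finset.mul_sum, ENNReal.ofReal_sum_of_nonneg]
            intro k _
            exact mul_nonneg hc.le (hτnonneg k ω)
        _ = ∑ k ∈ Finset.range (Nat.find hex),
              ENNReal.ofReal (c * τ k ω) * (A k).indicator 1 ω := by
            refine Finset.sum_congr rfl fun k hk => ?_
            rw [Set.indicator_of_mem (hlt k (Finset.mem_range.mp hk)), Pi.one_apply, mul_one]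
        _ ≤ ∑' n, ENNReal.ofReal (c * τ n ω) * (A n).indicator 1 ω := ENNReal.sum_le_tsum _
  -- each term by independence
  have hterm : ∀ n, (∫⁻ ω, ENNReal.ofReal (c * τ n ω) * (A n).indicator 1 ω ∂μ) =
      ENNReal.ofReal (c * m) * μ (A n) := by
    intro n
    set Sfin : Finset (Option ℕ) := {some n} with hSfin
    set Tfin : Finset (Option ℕ) := insert none ((Finset.range n).image some) with hTfin
    have hdisj : Disjoint Sfin Tfin := by
      simp only [hSfin, hTfin, Finset.disjoint_left, Finset.mem_singleton, Finset.mem_insert,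
        Finset.mem_image, Finset.mem_range]
      rintro a rfl
      push_neg
      refine ⟨by simp, fun k hk => by simp; omega⟩
    have h0 := hindep.indepFun_finset Sfin Tfin hdisj hOptMeas
    have hmemS : (some n) ∈ Sfin := Finset.mem_singleton_self _
    have hmemN : (none : Option ℕ) ∈ Tfin := Finset.mem_insert_self _ _
    have hmemT : ∀ k ∈ Finset.range n, some k ∈ Tfin := fun k hk =>
      Finset.mem_insert_of_mem (Finset.mem_image_of_mem some hk)
    set φ : (↥Sfin → ℝ) → ℝ≥0∞ := fun v => ENNReal.ofReal (c * v ⟨some n, hmemS⟩) with hφdef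
    set ψ : (↥Tfin → ℝ) → ℝ≥0∞ := fun v =>
      Set.indicator {v : ↥Tfin → ℝ | v ⟨none, hmemN⟩ > x + c * ∑ k ∈ (Finset.range n).attach,
        v ⟨some k.1, hmemT k.1 k.2⟩} 1 v with hψdef
    have hφ : Measurable φ := by
      rw [hφdef]; fun_prop
    have hsummeas : Measurable fun v : ↥Tfin → ℝ =>
        ∑ k ∈ (Finset.range n).attach, v ⟨some k.1, hmemT k.1 k.2⟩ :=
      Finset.measurable_sum _ fun k _ => measurable_pi_apply _
    have hψ : Measurable ψ := by
      refine measurable_one.indicator ?_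
      exact measurableSet_lt (measurable_const.add (hsummeas.const_mul c))
        (measurable_pi_apply _)
    have h1 : IndepFun (fun ω => ENNReal.ofReal (c * τ n ω))
        (fun ω => (A n).indicator (1 : Ω → ℝ≥0∞) ω) μ := by
      refine (h0.comp hφ hψ).congr (ae_of_all _ fun ω => rfl) (ae_of_all _ fun ω => ?_)
      have hsum : ∑ k ∈ (Finset.range n).attach, τ (k.1) ω = ∑ k ∈ Finset.range n, τ k ω :=
        Finset.sum_attach (Finset.range n) (fun k => τ k ω)
      simp only [Function.comp_apply, hψdef, Set.indicator_apply, Set.mem_setOf_eq,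
        Option.elim_none, Option.elim_some, hAdef, hSdef]
      simp only [hsum]
      split <;> rfl
    have hmf : Measurable fun ω => ENNReal.ofReal (c * τ n ω) :=
      ENNReal.measurable_ofReal.comp ((hτ n).const_mul c)
    have hmg : Measurable fun ω => (A n).indicator (1 : Ω → ℝ≥0∞) ω :=
      measurable_one.indicator (hAmeas n)
    have hmul := lintegral_mul_eq_lintegral_mul_lintegral_of_indepFun hmf hmg h1
    simp only [Pi.mul_apply] at hmul
    rw [hmul]
    have hτn_int : Integrable (τ n) μ := (hident n).integrable_iff.mpr hint
    have h2 : (∫⁻ ω, ENNReal.ofReal (c * τ n ω) ∂μ) = ENNReal.ofReal (c * m) := by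
      calc (∫⁻ ω, ENNReal.ofReal (c * τ n ω) ∂μ)
          = ENNReal.ofReal c * ∫⁻ ω, ENNReal.ofReal (τ n ω) ∂μ := by
            simp_rw [ENNReal.ofReal_mul hc.le]
            exact lintegral_const_mul _ (ENNReal.measurable_ofReal.comp (hτ n))
        _ = ENNReal.ofReal c * ENNReal.ofReal (∫ ω, τ n ω ∂μ) := by
            rw [ofReal_integral_eq_lintegral_ofReal hτn_int (ae_of_all _ (hτnonneg n))]
        _ = ENNReal.ofReal (c * m) := by
            rw [(hident n).integral_eq, ← ENNReal.ofReal_mul hc.le, hm]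
    rw [h2, lintegral_indicator_one (hAmeas n)]
  calc (∫⁻ u in Set.Ioi x, μ {ω | X ω > u})
      = ∫⁻ ω, ENNReal.ofReal (max (X ω - x) 0) ∂μ := hlayer
    _ ≤ ∫⁻ ω, ∑' n, ENNReal.ofReal (c * τ n ω) * (A n).indicator 1 ω ∂μ :=
        lintegral_mono_ae hbound
    _ = ∑' n, ∫⁻ ω, ENNReal.ofReal (c * τ n ω) * (A n).indicator 1 ω ∂μ :=
        lintegral_tsum fun n => ((ENNReal.measurable_ofReal.comp ((hτ n).const_mul c)).mul
          (measurable_one.indicator (hAmeas n))).aemeasurable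
    _ = ∑' n, ENNReal.ofReal (c * m) * μ (A n) := tsum_congr hterm
    _ = ENNReal.ofReal (c * m) * ∑' n, μ (A n) := ENNReal.tsum_mul_left
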